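/- Fix integers T ≥ 1 and n ≥ 1, matrices A_t ∈ ℝ^{n×n} and symmetric positive definite W_t (t = 0,…,T−1), a symmetric positive definite P_0, and symmetric positive semidefinite Θ_t and reals D_t > 0 (t = 1,…,T). Then the infimum of the nested objective J₁(P_1,…,P_T) = Σ_{t=1}^{T} [½ log det(A_{t−1} P_{t−1} A_{t−1}ᵀ + W_{t−1}) − ½ log det P_t] over the nested feasible set G equals the infimum of the max-det objective J(Π_1,…,Π_T) = −Σ_{t=1}^{T} ½ log det Π_t + c over the max-det feasible set F. -/

import Mathlib

open Matrix

/-- The nested feasible set `G`: sequences `P` with `P 0 = P₀`,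
`0 ≺ P t ⪯ A (t−1) * P (t−1) * (A (t−1))ᵀ + W (t−1)` and `Tr(Θ t * P t) ≤ D t`
for `t = 1, …, T`. -/
def nestedFeasible (n T : ℕ) (A W Θ : ℕ → Matrix (Fin n) (Fin n) ℝ)
    (P₀ : Matrix (Fin n) (Fin n) ℝ) (D : ℕ → ℝ) :
    Set (ℕ → Matrix (Fin n) (Fin n) ℝ) :=
  {P | P 0 = P₀ ∧ ∀ t, 1 ≤ t → t ≤ T →
    (P t).PosDef ∧
    (A (t - 1) * P (t - 1) * (A (t - 1))ᵀ + W (t - 1) - P t).PosSemidef ∧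
    (Θ t * P t).trace ≤ D t}

/-- The nested objective
`J₁(P) = Σ_{t=1}^{T} [½ log det (A (t−1) P (t−1) (A (t−1))ᵀ + W (t−1)) − ½ log det (P t)]`. -/
noncomputable def nestedObj (n T : ℕ) (A W : ℕ → Matrix (Fin n) (Fin n) ℝ)
    (P : ℕ → Matrix (Fin n) (Fin n) ℝ) : ℝ :=
  ∑ t ∈ Finset.Icc 1 T,
    ((1 / 2) * Real.log (A (t - 1) * P (t - 1) * (A (t - 1))ᵀ + W (t - 1)).det -
      (1 / 2) * Real.log (P t).det)

/-- The max-det feasible set `F`: pairs of sequences `(P, Π)` with `P 0 = P₀`,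
`Π t ≻ 0` for `t = 1, …, T`, `P (t+1) ⪯ A t * P t * (A t)ᵀ + W t` for `t = 0, …, T−1`,
the block LMI for `t = 1, …, T−1`, `Tr(Θ t * P t) ≤ D t` for `t = 1, …, T`, and
`P T = Π T`. -/
def maxdetFeasible (n T : ℕ) (A W Θ : ℕ → Matrix (Fin n) (Fin n) ℝ)
    (P₀ : Matrix (Fin n) (Fin n) ℝ) (D : ℕ → ℝ) :
    Set ((ℕ → Matrix (Fin n) (Fin n) ℝ) × (ℕ → Matrix (Fin n) (Fin n) ℝ)) :=
  {PQ | PQ.1 0 = P₀ ∧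
    (∀ t, 1 ≤ t → t ≤ T → (PQ.2 t).PosDef) ∧
    (∀ t, t < T → (A t * PQ.1 t * (A t)ᵀ + W t - PQ.1 (t + 1)).PosSemidef) ∧
    (∀ t, 1 ≤ t → t < T →
      (fromBlocks (PQ.1 t - PQ.2 t) (PQ.1 t * (A t)ᵀ) (A t * PQ.1 t)
        (W t + A t * PQ.1 t * (A t)ᵀ)).PosSemidef) ∧
    (∀ t, 1 ≤ t → t ≤ T → (Θ t * PQ.1 t).trace ≤ D t) ∧
    PQ.1 T = PQ.2 T}

/-- The constant `c = ½ log det (A 0 P₀ (A 0)ᵀ + W 0) + Σ_{t=1}^{T−1} ½ log det (W t)`. -/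
noncomputable def maxdetConst (n T : ℕ) (A W : ℕ → Matrix (Fin n) (Fin n) ℝ)
    (P₀ : Matrix (Fin n) (Fin n) ℝ) : ℝ :=
  (1 / 2) * Real.log (A 0 * P₀ * (A 0)ᵀ + W 0).det +
    ∑ t ∈ Finset.Ico 1 T, (1 / 2) * Real.log (W t).det

/-- The max-det objective `J(Π) = −Σ_{t=1}^{T} ½ log det (Π t) + c`. -/
noncomputable def maxdetObj (n T : ℕ) (A W : ℕ → Matrix (Fin n) (Fin n) ℝ)
    (P₀ : Matrix (Fin n) (Fin n) ℝ) (Q : ℕ → Matrix (Fin n) (Fin n) ℝ) : ℝ :=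
  -∑ t ∈ Finset.Icc 1 T, (1 / 2) * Real.log (Q t).det + maxdetConst n T A W P₀


namespace NestedMaxdetAux

variable {n : ℕ}

lemma transpose_eq_self {P : Matrix (Fin n) (Fin n) ℝ} (h : P.IsHermitian) : Pᵀ = P := by
  rw [← conjTranspose_eq_transpose_of_trivial]; exact h

lemma psd_mul_mul_transpose {P : Matrix (Fin n) (Fin n) ℝ} (hP : P.PosSemidef)
    (B : Matrix (Fin n) (Fin n) ℝ) : (B * P * Bᵀ).PosSemidef := by
  rw [← conjTranspose_eq_transpose_of_trivial]
  exact hP.mul_mul_conjTranspose_same B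

lemma psd_smul {c : ℝ} {M : Matrix (Fin n) (Fin n) ℝ} (hM : M.PosSemidef) (hc : 0 ≤ c) :
    (c • M).PosSemidef := by
  refine posSemidef_iff_dotProduct_mulVec.mpr ⟨?_, fun x => ?_⟩
  · simp [Matrix.IsHermitian, conjTranspose_smul, transpose_eq_self hM.1]
  · rw [smul_mulVec, dotProduct_smul, smul_eq_mul]
    exact mul_nonneg hc (hM.dotProduct_mulVec_nonneg x)

lemma pd_smul {c : ℝ} {M : Matrix (Fin n) (Fin n) ℝ} (hM : M.PosDef) (hc : 0 < c) :
    (c • M).PosDef := by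
  refine posDef_iff_dotProduct_mulVec.mpr ⟨?_, fun x hx => ?_⟩
  · simp [Matrix.IsHermitian, conjTranspose_smul, transpose_eq_self hM.1]
  · rw [smul_mulVec, dotProduct_smul, smul_eq_mul]
    exact mul_pos hc (hM.dotProduct_mulVec_pos hx)

lemma psd_trace_nonneg {M : Matrix (Fin n) (Fin n) ℝ} (hM : M.PosSemidef) : 0 ≤ M.trace := by
  rw [Matrix.trace]
  refine Finset.sum_nonneg fun i _ => ?_
  have := hM.dotProduct_mulVec_nonneg (Pi.single i 1)
  simpa [Matrix.diag, dotProduct, mulVec, Pi.single_apply, Finset.sum_ite_eq,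
    Finset.sum_ite_eq'] using this

open scoped MatrixOrder in
lemma psd_mul_trace_nonneg {M N : Matrix (Fin n) (Fin n) ℝ} (hM : M.PosSemidef)
    (hN : N.PosSemidef) : 0 ≤ (M * N).trace := by
  classical
  obtain ⟨B, rfl⟩ := CStarAlgebra.nonneg_iff_eq_star_mul_self.mp hN.nonneg
  rw [star_eq_conjTranspose]
  rw [← Matrix.mul_assoc, Matrix.trace_mul_comm, ← Matrix.mul_assoc]
  exact psd_trace_nonneg (hM.mul_mul_conjTranspose_same B)

lemma posDef_of_psd_det {M : Matrix (Fin n) (Fin n) ℝ} (hM : M.PosSemidef) (hd : M.det ≠ 0) :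
    M.PosDef := by
  refine posDef_iff_dotProduct_mulVec.mpr ⟨hM.1, fun x hx => ?_⟩
  rcases eq_or_lt_of_le (hM.dotProduct_mulVec_nonneg x) with h0 | h
  · exfalso
    have hMx : M *ᵥ x = 0 := (hM.dotProduct_mulVec_zero_iff x).mp h0.symm
    have : x = 0 := by
      have h1 : M⁻¹ *ᵥ (M *ᵥ x) = x := by
        rw [mulVec_mulVec, Matrix.nonsing_inv_mul M (Ne.isUnit hd), one_mulVec]
      rw [hMx, mulVec_zero] at h1
      exact h1.symm
    exact hx this
  · exact h

lemma one_le_det_of {Z : Matrix (Fin n) (Fin n) ℝ} (hZ : Z.IsHermitian)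
    (h : (Z - 1).PosSemidef) : 1 ≤ Z.det := by
  have hdet : Z.det = ∏ i : Fin n, hZ.eigenvalues i := by
    rw [hZ.det_eq_prod_eigenvalues]; norm_num
  rw [hdet]
  refine le_trans (le_of_eq (Finset.prod_const_one).symm)
    (Finset.prod_le_prod (fun i _ => zero_le_one) (fun i _ => ?_))
  have key : ∀ v : Fin n → ℝ, Z *ᵥ v = hZ.eigenvalues i • v → v ⬝ᵥ v = 1 →
      1 ≤ hZ.eigenvalues i := by
    intro v hv hvv
    have hq := h.dotProduct_mulVec_nonneg v
    rw [sub_mulVec, one_mulVec, dotProduct_sub, hv, dotProduct_smul, smul_eq_mul] at hq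
    simp only [star_trivial] at hq
    rw [hvv] at hq
    linarith
  refine key _ (hZ.mulVec_eigenvectorBasis i) ?_
  have h2 := EuclideanSpace.inner_eq_star_dotProduct (𝕜 := ℝ)
    (hZ.eigenvectorBasis i) (hZ.eigenvectorBasis i)
  rw [real_inner_self_eq_norm_sq, hZ.eigenvectorBasis.orthonormal.1 i] at h2
  simpa [star_trivial] using h2.symm

open scoped MatrixOrder in
lemma det_le_det {X Y : Matrix (Fin n) (Fin n) ℝ} (hX : X.PosDef)
    (h : (Y - X).PosSemidef) : X.det ≤ Y.det := by
  classical
  obtain ⟨R, hRpsd, hRX⟩ : ∃ R : Matrix (Fin n) (Fin n) ℝ, R.PosSemidef ∧ R * R = X :=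
    ⟨CFC.sqrt X, Matrix.nonneg_iff_posSemidef.mp (CFC.sqrt_nonneg X),
      CFC.sqrt_mul_sqrt_self X hX.posSemidef.nonneg⟩
  have hXdet : 0 < X.det := hX.det_pos
  have hRdet : R.det ≠ 0 := by
    intro h0
    rw [← hRX, det_mul, h0, mul_zero] at hXdet
    exact lt_irrefl _ hXdet
  have hRt : Rᵀ = R := transpose_eq_self hRpsd.1
  have hRinvT : R⁻¹ᵀ = R⁻¹ := transpose_eq_self hRpsd.1.inv
  have hRR : R⁻¹ * R = 1 := Matrix.nonsing_inv_mul R (Ne.isUnit hRdet)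
  have hRR' : R * R⁻¹ = 1 := Matrix.mul_nonsing_inv R (Ne.isUnit hRdet)
  set Z := R⁻¹ * Y * R⁻¹ with hZ
  have hXZ : R⁻¹ * X * R⁻¹ = 1 := by
    rw [← hRX]
    simp only [Matrix.mul_assoc, hRR']
    simp [hRR]
  have hZ1 : Z - 1 = R⁻¹ * (Y - X) * R⁻¹ := by
    rw [Matrix.mul_sub, Matrix.sub_mul, hXZ]
  have hZ1psd : (Z - 1).PosSemidef := by
    have hpsd := psd_mul_mul_transpose h R⁻¹
    rw [hRinvT] at hpsd
    rw [hZ1]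
    exact hpsd
  have hZherm : Z.IsHermitian := by
    have := hZ1psd.1.add (Matrix.isHermitian_one)
    rwa [sub_add_cancel] at this
  have hdetZ : 1 ≤ Z.det := one_le_det_of hZherm hZ1psd
  have hY : Y = R * Z * R := by
    rw [hZ, ← Matrix.mul_assoc, ← Matrix.mul_assoc, hRR', one_mul, Matrix.mul_assoc, hRR,
      Matrix.mul_one]
  have hdetY : Y.det = R.det * Z.det * R.det := by
    rw [hY, det_mul, det_mul]
  have hXdet' : X.det = R.det * R.det := by rw [← hRX, det_mul]
  have e : R.det * Z.det * R.det = X.det * Z.det := by rw [hXdet']; ring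
  rw [hdetY, e]
  nlinarith [mul_le_mul_of_nonneg_left hdetZ hXdet.le]


lemma psd_fromBlocks₁₁' {A B C D : Matrix (Fin n) (Fin n) ℝ} (hC : Bᴴ = C) (hA : A.PosDef)
    [Invertible A] :
    (fromBlocks A B C D).PosSemidef ↔ (D - C * A⁻¹ * B).PosSemidef := by
  subst hC; exact Matrix.PosDef.fromBlocks₁₁ B D hA

lemma psd_fromBlocks₂₂' {A B C D : Matrix (Fin n) (Fin n) ℝ} (hC : Bᴴ = C) (hD : D.PosDef)
    [Invertible D] :
    (fromBlocks A B C D).PosSemidef ↔ (A - B * D⁻¹ * C).PosSemidef := by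
  subst hC; exact Matrix.PosDef.fromBlocks₂₂ A B hD

lemma schur_pack (A P W : Matrix (Fin n) (Fin n) ℝ) (hP : P.PosDef) (hW : W.PosDef) :
    (P - P * Aᵀ * (W + A * P * Aᵀ)⁻¹ * (A * P)).PosDef ∧
    (fromBlocks (P - (P - P * Aᵀ * (W + A * P * Aᵀ)⁻¹ * (A * P))) (P * Aᵀ) (A * P)
      (W + A * P * Aᵀ)).PosSemidef ∧
    (P - P * Aᵀ * (W + A * P * Aᵀ)⁻¹ * (A * P)).det * (W + A * P * Aᵀ).det
      = P.det * W.det ∧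
    (∀ Q' : Matrix (Fin n) (Fin n) ℝ,
      (fromBlocks (P - Q') (P * Aᵀ) (A * P) (W + A * P * Aᵀ)).PosSemidef →
      ((P - P * Aᵀ * (W + A * P * Aᵀ)⁻¹ * (A * P)) - Q').PosSemidef) := by
  have hPt : Pᵀ = P := transpose_eq_self hP.1
  have hS : (W + A * P * Aᵀ).PosDef := hW.add_posSemidef (psd_mul_mul_transpose hP.posSemidef A)
  have hPdet : IsUnit P.det := Ne.isUnit hP.det_pos.ne'
  have hSdet : IsUnit (W + A * P * Aᵀ).det := Ne.isUnit hS.det_pos.ne'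
  haveI : Invertible P := P.invertibleOfIsUnitDet hPdet
  haveI : Invertible (W + A * P * Aᵀ) := (W + A * P * Aᵀ).invertibleOfIsUnitDet hSdet
  have hBH : (P * Aᵀ)ᴴ = A * P := by
    rw [conjTranspose_eq_transpose_of_trivial, transpose_mul, transpose_transpose, hPt]
  have hcalc : A * P * P⁻¹ * (P * Aᵀ) = A * P * Aᵀ := by
    rw [Matrix.mul_assoc A P P⁻¹, Matrix.mul_nonsing_inv P hPdet, Matrix.mul_one,
      ← Matrix.mul_assoc]
  have hMpsd : (fromBlocks P (P * Aᵀ) (A * P) (W + A * P * Aᵀ)).PosSemidef := by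
    rw [psd_fromBlocks₁₁' hBH hP, hcalc, add_sub_cancel_right]
    exact hW.posSemidef
  have hQ0psd : (P - P * Aᵀ * (W + A * P * Aᵀ)⁻¹ * (A * P)).PosSemidef :=
    (psd_fromBlocks₂₂' hBH hS).mp hMpsd
  have hdet1 : (fromBlocks P (P * Aᵀ) (A * P) (W + A * P * Aᵀ)).det = P.det * W.det := by
    rw [det_fromBlocks₁₁, invOf_eq_nonsing_inv, hcalc, add_sub_cancel_right]
  have hdet2 : (fromBlocks P (P * Aᵀ) (A * P) (W + A * P * Aᵀ)).det
      = (W + A * P * Aᵀ).det * (P - P * Aᵀ * (W + A * P * Aᵀ)⁻¹ * (A * P)).det := by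
    rw [det_fromBlocks₂₂, invOf_eq_nonsing_inv]
  have hdetid : (P - P * Aᵀ * (W + A * P * Aᵀ)⁻¹ * (A * P)).det * (W + A * P * Aᵀ).det
      = P.det * W.det := by
    rw [mul_comm, ← hdet2, hdet1]
  have hQ0det : (P - P * Aᵀ * (W + A * P * Aᵀ)⁻¹ * (A * P)).det ≠ 0 := by
    intro h0
    rw [h0, zero_mul] at hdetid
    nlinarith [hP.det_pos, hW.det_pos]
  refine ⟨posDef_of_psd_det hQ0psd hQ0det, ?_, hdetid, ?_⟩
  · rw [sub_sub_cancel, psd_fromBlocks₂₂' hBH hS, sub_self]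
    exact Matrix.PosSemidef.zero
  · intro Q' hblk
    have h2 := (psd_fromBlocks₂₂' hBH hS).mp hblk
    rwa [sub_right_comm] at h2

end NestedMaxdetAux


namespace NestedMaxdetAux

lemma sum_shift (u : ℕ → ℝ) (b : ℕ) :
    ∑ t ∈ Finset.Ico 1 (b + 1), u t = ∑ t ∈ Finset.range b, u (t + 1) := by
  induction b with
  | zero => simp
  | succ k ih => rw [Finset.sum_Ico_succ_top (by omega), ih, Finset.sum_range_succ]

lemma sInf_eq_sInf {S S' : Set ℝ} (hne : S.Nonempty) (hsub : S ⊆ S')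
    (hdom : ∀ y ∈ S', ∃ x ∈ S, x ≤ y) : sInf S = sInf S' := by
  by_cases hb : BddBelow S'
  · refine le_antisymm ?_ (csInf_le_csInf hb hne hsub)
    refine le_csInf (hne.mono hsub) fun y hy => ?_
    obtain ⟨x, hx, hxy⟩ := hdom y hy
    exact le_trans (csInf_le (hb.mono hsub) hx) hxy
  · have hb' : ¬ BddBelow S := by
      intro ⟨b, hbS⟩
      refine hb ⟨b, fun y hy => ?_⟩
      obtain ⟨x, hx, hxy⟩ := hdom y hy
      exact le_trans (hbS hx) hxy
    rw [Real.sInf_of_not_bddBelow hb, Real.sInf_of_not_bddBelow hb']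

lemma obj_sub {n : ℕ} (T : ℕ) (hT : 1 ≤ T) (A W : ℕ → Matrix (Fin n) (Fin n) ℝ)
    (P₀ : Matrix (Fin n) (Fin n) ℝ) (P Q : ℕ → Matrix (Fin n) (Fin n) ℝ)
    (hP0 : P 0 = P₀) (hQT : (Q T).det = (P T).det) :
    nestedObj n T A W P - maxdetObj n T A W P₀ Q =
      ∑ t ∈ Finset.range (T - 1),
        ((1 / 2) * Real.log (A (t + 1) * P (t + 1) * (A (t + 1))ᵀ + W (t + 1)).det
          - (1 / 2) * Real.log (W (t + 1)).det
          - (1 / 2) * Real.log (P (t + 1)).det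
          + (1 / 2) * Real.log (Q (t + 1)).det) := by
  obtain ⟨y, rfl⟩ : ∃ y, T = y + 1 := ⟨T - 1, by omega⟩
  unfold nestedObj maxdetObj maxdetConst
  subst hP0
  simp only [← Finset.Ico_add_one_right_eq_Icc, sum_shift, Nat.add_sub_cancel]
  rw [Finset.sum_sub_distrib, Finset.sum_range_succ'
    (fun t => (1 / 2) * Real.log (A t * P t * (A t)ᵀ + W t).det) y]
  rw [Finset.sum_range_succ (fun t => (1 / 2) * Real.log (P (t + 1)).det) y,
    Finset.sum_range_succ (fun t => (1 / 2) * Real.log (Q (t + 1)).det) y]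
  rw [hQT]
  simp only [Finset.sum_add_distrib, Finset.sum_sub_distrib]
  ring

end NestedMaxdetAux

namespace NestedMaxdetAux
variable {n : ℕ}

lemma psd_block_topleft {A B C D : Matrix (Fin n) (Fin n) ℝ}
    (h : (fromBlocks A B C D).PosSemidef) : A.PosSemidef := by
  rw [posSemidef_iff_dotProduct_mulVec]
  constructor
  · have h1 := congrArg Matrix.toBlocks₁₁ h.1
    rwa [fromBlocks_conjTranspose, toBlocks_fromBlocks₁₁, toBlocks_fromBlocks₁₁] at h1
  · intro x
    have h2 := h.dotProduct_mulVec_nonneg (Sum.elim x 0)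
    simpa [fromBlocks_mulVec, sumElim_dotProduct_sumElim] using h2

lemma schur_logdet (A P W : Matrix (Fin n) (Fin n) ℝ) (hP : P.PosDef) (hW : W.PosDef) :
    Real.log (P - P * Aᵀ * (W + A * P * Aᵀ)⁻¹ * (A * P)).det
      = Real.log P.det + Real.log W.det - Real.log (A * P * Aᵀ + W).det := by
  obtain ⟨hpd, -, hdetid, -⟩ := schur_pack A P W hP hW
  have hS : (W + A * P * Aᵀ).PosDef :=
    hW.add_posSemidef (psd_mul_mul_transpose hP.posSemidef A)
  have hlog := congrArg Real.log hdetid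
  rw [Real.log_mul hpd.det_pos.ne' hS.det_pos.ne',
    Real.log_mul hP.det_pos.ne' hW.det_pos.ne'] at hlog
  rw [add_comm (A * P * Aᵀ) W]
  linarith

end NestedMaxdetAux

open NestedMaxdetAux

/-- The infimum of the nested objective over the nested feasible set
equals the infimum of the max-det objective over the max-det feasible set. -/
theorem nested_eq_maxdet (n T : ℕ) (hn : 0 < n) (hT : 1 ≤ T)
    (A W Θ : ℕ → Matrix (Fin n) (Fin n) ℝ) (P₀ : Matrix (Fin n) (Fin n) ℝ)
    (D : ℕ → ℝ)
    (hW : ∀ t, t < T → (W t).PosDef) (hP₀ : P₀.PosDef)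
    (hΘ : ∀ t, 1 ≤ t → t ≤ T → (Θ t).PosSemidef)
    (hD : ∀ t, 1 ≤ t → t ≤ T → 0 < D t) :
    sInf (nestedObj n T A W '' nestedFeasible n T A W Θ P₀ D) =
      sInf ((fun PQ => maxdetObj n T A W P₀ PQ.2) ''
        maxdetFeasible n T A W Θ P₀ D) := by
  classical
  -- nonemptiness of the nested feasible set
  have hGne : (nestedFeasible n T A W Θ P₀ D).Nonempty := by
    set εf : ℕ → ℝ := fun t => min 1 (D t / ((Θ t * W (t - 1)).trace + 1)) with hεf
    set Pc : ℕ → Matrix (Fin n) (Fin n) ℝ :=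
      fun t => if t = 0 then P₀ else εf t • W (t - 1) with hPcdef
    have hεpos : ∀ t, 1 ≤ t → t ≤ T →
        0 < εf t ∧ εf t ≤ 1 ∧ εf t * (Θ t * W (t - 1)).trace ≤ D t := by
      intro t h1 h2
      have hτ : 0 ≤ (Θ t * W (t - 1)).trace :=
        psd_mul_trace_nonneg (hΘ t h1 h2) (hW (t - 1) (by omega)).posSemidef
      have hd := hD t h1 h2
      have hdiv : 0 < D t / ((Θ t * W (t - 1)).trace + 1) := div_pos hd (by linarith)
      refine ⟨lt_min one_pos hdiv, min_le_left _ _, ?_⟩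
      have h3 : εf t * ((Θ t * W (t - 1)).trace + 1) ≤ D t :=
        (le_div_iff₀ (by linarith)).mp (min_le_right _ _)
      nlinarith [lt_min one_pos hdiv]
    have hPcpsd : ∀ s, s < T → (Pc s).PosSemidef := by
      intro s hs
      by_cases h0 : s = 0
      · subst h0; simpa [hPcdef] using hP₀.posSemidef
      · have h1s : 1 ≤ s := by omega
        have hε := (hεpos s h1s (le_of_lt hs)).1
        simp only [hPcdef, if_neg h0]
        exact psd_smul (hW (s - 1) (by omega)).posSemidef hε.le
    refine ⟨Pc, ?_, ?_⟩
    · simp [hPcdef]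
    · intro t h1 h2
      obtain ⟨hε0, hε1, hεtr⟩ := hεpos t h1 h2
      have ht0 : t ≠ 0 := by omega
      have hPt : Pc t = εf t • W (t - 1) := by simp [hPcdef, ht0]
      refine ⟨?_, ?_, ?_⟩
      · rw [hPt]; exact pd_smul (hW (t - 1) (by omega)) hε0
      · rw [hPt]
        have e : A (t-1) * Pc (t-1) * (A (t-1))ᵀ + W (t-1) - εf t • W (t-1)
            = A (t-1) * Pc (t-1) * (A (t-1))ᵀ + (1 - εf t) • W (t-1) := by
          rw [sub_smul, one_smul]; abel
        rw [e]
        exact (psd_mul_mul_transpose (hPcpsd (t-1) (by omega)) _).add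
          (psd_smul (hW (t-1) (by omega)).posSemidef (by linarith))
      · rw [hPt, Matrix.mul_smul, trace_smul, smul_eq_mul]
        exact hεtr
  -- direction G → F with equal objective value
  have key1 : ∀ P ∈ nestedFeasible n T A W Θ P₀ D, ∃ Q : ℕ → Matrix (Fin n) (Fin n) ℝ,
      (P, Q) ∈ maxdetFeasible n T A W Θ P₀ D ∧
      maxdetObj n T A W P₀ Q = nestedObj n T A W P := by
    intro P hPG
    obtain ⟨hP0, hPt⟩ := hPG
    set Qf : ℕ → Matrix (Fin n) (Fin n) ℝ := fun t => if t = T then P T else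
      P t - P t * (A t)ᵀ * (W t + A t * P t * (A t)ᵀ)⁻¹ * (A t * P t) with hQf
    have hQfT : Qf T = P T := by simp [hQf]
    have hQflt : ∀ t, t < T →
        Qf t = P t - P t * (A t)ᵀ * (W t + A t * P t * (A t)ᵀ)⁻¹ * (A t * P t) := by
      intro t hlt; simp [hQf, Nat.ne_of_lt hlt]
    refine ⟨Qf, ⟨hP0, ?_, ?_, ?_, fun t h1 h2 => (hPt t h1 h2).2.2, hQfT.symm⟩, ?_⟩
    · -- Qf t PosDef
      intro t h1 h2
      show (Qf t).PosDef
      by_cases hq : t = T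
      · rw [hq, hQfT]; exact (hPt T hT le_rfl).1
      · have hlt : t < T := by omega
        rw [hQflt t hlt]
        exact (schur_pack (A t) (P t) (W t) (hPt t h1 (le_of_lt hlt)).1 (hW t hlt)).1
    · -- monotonicity
      intro t hlt
      have h := (hPt (t + 1) (by omega) (by omega)).2.1
      simpa using h
    · -- block LMI
      intro t h1 hlt
      show (fromBlocks (P t - Qf t) (P t * (A t)ᵀ) (A t * P t)
        (W t + A t * P t * (A t)ᵀ)).PosSemidef
      rw [hQflt t hlt]
      exact (schur_pack (A t) (P t) (W t) (hPt t h1 (le_of_lt hlt)).1 (hW t hlt)).2.1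
    · -- objective equality
      have hQT : (Qf T).det = (P T).det := by rw [hQfT]
      have hsub := obj_sub T hT A W P₀ P Qf hP0 hQT
      have hzero : ∑ t ∈ Finset.range (T - 1),
          ((1 / 2) * Real.log (A (t + 1) * P (t + 1) * (A (t + 1))ᵀ + W (t + 1)).det
            - (1 / 2) * Real.log (W (t + 1)).det
            - (1 / 2) * Real.log (P (t + 1)).det
            + (1 / 2) * Real.log (Qf (t + 1)).det) = 0 := by
        refine Finset.sum_eq_zero fun t ht => ?_
        have htlt : t + 1 < T := by
          have := Finset.mem_range.mp ht; omega
        rw [hQflt (t + 1) htlt,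
          schur_logdet (A (t+1)) (P (t+1)) (W (t+1))
            (hPt (t+1) (by omega) (by omega)).1 (hW (t+1) htlt)]
        ring
      rw [hzero] at hsub
      linarith
  -- direction F → G with objective domination
  have key2 : ∀ PQ ∈ maxdetFeasible n T A W Θ P₀ D,
      PQ.1 ∈ nestedFeasible n T A W Θ P₀ D ∧
      nestedObj n T A W PQ.1 ≤ maxdetObj n T A W P₀ PQ.2 := by
    intro PQ hPQF
    obtain ⟨h0, hQpd, hmono, hblk, htr, hPT⟩ := hPQF
    have hPG : PQ.1 ∈ nestedFeasible n T A W Θ P₀ D := by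
      refine ⟨h0, ?_⟩
      intro t h1 h2
      have hpd : (PQ.1 t).PosDef := by
        by_cases hq : t = T
        · rw [hq, hPT]; exact hQpd T hT le_rfl
        · have hlt : t < T := by omega
          have htop := psd_block_topleft (hblk t h1 hlt)
          have e : PQ.2 t + (PQ.1 t - PQ.2 t) = PQ.1 t := by abel
          rw [← e]
          exact (hQpd t h1 (le_of_lt hlt)).add_posSemidef htop
      refine ⟨hpd, ?_, htr t h1 h2⟩
      have h := hmono (t - 1) (by omega)
      have e : t - 1 + 1 = t := by omega
      rwa [e] at h
    refine ⟨hPG, ?_⟩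
    have hQT : (PQ.2 T).det = (PQ.1 T).det := by rw [hPT]
    have hsub := obj_sub T hT A W P₀ PQ.1 PQ.2 h0 hQT
    have hle : ∑ t ∈ Finset.range (T - 1),
        ((1 / 2) * Real.log (A (t + 1) * PQ.1 (t + 1) * (A (t + 1))ᵀ + W (t + 1)).det
          - (1 / 2) * Real.log (W (t + 1)).det
          - (1 / 2) * Real.log (PQ.1 (t + 1)).det
          + (1 / 2) * Real.log (PQ.2 (t + 1)).det) ≤ 0 := by
      refine Finset.sum_nonpos fun t ht => ?_
      have htlt : t + 1 < T := by
        have := Finset.mem_range.mp ht; omega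
      have hupd : (PQ.1 (t + 1)).PosDef := (hPG.2 (t + 1) (by omega) (by omega)).1
      obtain ⟨hpk1, -, -, hpk4⟩ :=
        schur_pack (A (t+1)) (PQ.1 (t+1)) (W (t+1)) hupd (hW (t+1) htlt)
      have hcle := hpk4 (PQ.2 (t+1)) (hblk (t+1) (by omega) htlt)
      have hQupd := hQpd (t+1) (by omega) (by omega)
      have hdetle := det_le_det hQupd hcle
      have hlogle : Real.log (PQ.2 (t+1)).det ≤
          Real.log (PQ.1 (t+1) - PQ.1 (t+1) * (A (t+1))ᵀ *
            (W (t+1) + A (t+1) * PQ.1 (t+1) * (A (t+1))ᵀ)⁻¹ *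
            (A (t+1) * PQ.1 (t+1))).det :=
        Real.log_le_log hQupd.det_pos hdetle
      have hlogeq := schur_logdet (A (t+1)) (PQ.1 (t+1)) (W (t+1)) hupd (hW (t+1) htlt)
      linarith
    linarith
  -- assemble
  apply sInf_eq_sInf
  · exact hGne.image _
  · rintro v ⟨P, hP, rfl⟩
    obtain ⟨Q, hQF, hQeq⟩ := key1 P hP
    exact ⟨(P, Q), hQF, hQeq⟩
  · rintro y ⟨PQ, hPQ, rfl⟩
    obtain ⟨hPGmem, hle⟩ := key2 PQ hPQ
    exact ⟨nestedObj n T A W PQ.1, ⟨PQ.1, hPGmem, rfl⟩, hle⟩
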